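/- Let x : [t₀,∞) → ℝ^n be differentiable at t with ẋ(t) = −proj_{C_α(x(t),t)}(0), where C_α(x(t),t) = conv{∇f_i(x(t))/α_i(x(t),t) : i=1,…,m} and each α_i(x(t),t) ≥ α(x(t),t) > 0. Then for each i, α(x(t),t)·‖ẋ(t)‖² + (d/dt) f_i(x(t)) ≤ 0. -/

import Mathlib

noncomputable section
open Metric Set
local notation "⟪" x ", " y "⟫_ℝ" => @inner ℝ _ _ x y

/-- descent inequality along the balanced gradient flow:
`α(x(t),t)·‖ẋ(t)‖² + (d/dt) f_i(x(t)) ≤ 0`. -/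
theorem descent_inequality_MBGF {n m : ℕ} [NeZero m]
    (f : Fin m → EuclideanSpace ℝ (Fin n) → ℝ)
    (g : Fin m → EuclideanSpace ℝ (Fin n) → EuclideanSpace ℝ (Fin n))
    (x : ℝ → EuclideanSpace ℝ (Fin n)) (t : ℝ)
    (hg : ∀ i, HasGradientAt (f i) (g i (x t)) (x t))
    (x' : EuclideanSpace ℝ (Fin n)) (hx : HasDerivAt x x' t)
    (αi : Fin m → ℝ) (a : ℝ) (ha : 0 < a) (hai : ∀ i, a ≤ αi i)
    (p : EuclideanSpace ℝ (Fin n))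
    (hpmem : p ∈ convexHull ℝ (Set.range fun i => (αi i)⁻¹ • g i (x t)))
    (hpmin : ∀ y ∈ convexHull ℝ (Set.range fun i => (αi i)⁻¹ • g i (x t)), ‖p‖ ≤ ‖y‖)
    (hflow : x' = -p)
    (d : Fin m → ℝ) (hd : ∀ i, HasDerivAt (fun s => f i (x s)) (d i) t) :
    ∀ i, a * ‖x'‖ ^ 2 + d i ≤ 0 := by
  intro i
  set K := convexHull ℝ (Set.range fun i => (αi i)⁻¹ • g i (x t)) with hK
  -- chain rule: d i = ⟪g i (x t), x'⟫
  have hchain : HasDerivAt (fun s => f i (x s)) (⟪g i (x t), x'⟫_ℝ) t := by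
    have := ((hg i).hasFDerivAt.comp_hasDerivAt t hx)
    simp at this
    exact this
  have hdi : d i = ⟪g i (x t), x'⟫_ℝ := (hd i).unique hchain
  -- projection characterization
  have hconv : Convex ℝ K := convex_convexHull ℝ _
  haveI : Nonempty K := ⟨⟨p, hpmem⟩⟩
  have hmin' : ‖(0 : EuclideanSpace ℝ (Fin n)) - p‖ = ⨅ w : K, ‖(0 : EuclideanSpace ℝ (Fin n)) - w‖ := by
    apply le_antisymm
    · apply le_ciInf
      intro w
      simpa using hpmin w w.2
    · exact ciInf_le ⟨0, fun _ ⟨_, h⟩ => h ▸ norm_nonneg _⟩ (⟨p, hpmem⟩ : K)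
  have hproj := (norm_eq_iInf_iff_real_inner_le_zero hconv hpmem).mp hmin'
  have hcK : (αi i)⁻¹ • g i (x t) ∈ K :=
    subset_convexHull ℝ _ ⟨i, rfl⟩
  have h1 := hproj _ hcK
  have hαpos : 0 < αi i := lt_of_lt_of_le ha (hai i)
  have key : ‖p‖ ^ 2 ≤ (αi i)⁻¹ * ⟪g i (x t), p⟫_ℝ := by
    have : ⟪(0 : EuclideanSpace ℝ (Fin n)) - p, (αi i)⁻¹ • g i (x t) - p⟫_ℝ ≤ 0 := h1
    rw [zero_sub, inner_neg_left, inner_sub_right, real_inner_smul_right,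
      real_inner_self_eq_norm_sq, real_inner_comm] at this
    linarith
  have key2 : a * ‖p‖ ^ 2 ≤ ⟪g i (x t), p⟫_ℝ := by
    have h2 := mul_le_mul_of_nonneg_left key (le_of_lt hαpos)
    have h3 : αi i * ((αi i)⁻¹ * ⟪g i (x t), p⟫_ℝ) = ⟪g i (x t), p⟫_ℝ := by
      field_simp
    have h4 := mul_le_mul_of_nonneg_right (hai i) (sq_nonneg ‖p‖)
    nlinarith
  rw [hdi, hflow, inner_neg_right, norm_neg]
  linarith
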